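/- Let μ be a symmetric probability measure on ℝ (i.e., μ(S) = μ(−S) for every Borel set S) and let ν be a symmetric probability measure with compact support. Suppose there is a sequence t_k → ∞ of positive reals such that G_μ(i t_k) = G_ν(i t_k) for all k, where G denotes the Cauchy transform. Then μ has finite moments of all orders, the moments of μ equal those of ν, and hence μ = ν. -/

import Mathlib

open MeasureTheory Filter

lemma aux_int (ρ : Measure ℝ) [IsProbabilityMeasure ρ] {s : ℝ} (hs : 0 < s) :
    Integrable (fun u : ℝ => (Complex.I * s - (u : ℂ))⁻¹) ρ := by
  have hcont : Continuous (fun u : ℝ => (Complex.I * s - (u : ℂ))⁻¹) := by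
    apply Continuous.inv₀
    · continuity
    · intro u
      intro h
      have : (Complex.I * s - (u : ℂ)).im = s := by simp
      rw [h] at this
      simp at this
      exact hs.ne this
  apply (integrable_const (s⁻¹)).mono' hcont.aestronglyMeasurable
  filter_upwards with u
  rw [norm_inv]
  have h1 : s ≤ ‖Complex.I * s - (u : ℂ)‖ := by
    have := Complex.abs_im_le_norm (Complex.I * s - (u : ℂ))
    simp only [Complex.sub_im, Complex.mul_im, Complex.I_re, Complex.ofReal_re, Complex.I_im,
      Complex.ofReal_im] at this
    simpa [abs_of_pos hs] using this
  exact inv_anti₀ hs h1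

lemma aux_im (ρ : Measure ℝ) [IsProbabilityMeasure ρ] {s : ℝ} (hs : 0 < s) :
    (∫ u : ℝ, (Complex.I * s - (u : ℂ))⁻¹ ∂ρ).im
      = ∫ u : ℝ, (-s) * (u ^ 2 + s ^ 2)⁻¹ ∂ρ := by
  have h := integral_im (𝕜 := ℂ) (aux_int ρ hs)
  simp only [RCLike.im_to_complex] at h
  rw [← h]
  congr 1
  funext u
  rw [Complex.inv_im]
  have hsq : Complex.normSq (Complex.I * s - (u : ℂ)) = u ^ 2 + s ^ 2 := by
    simp [Complex.normSq_apply]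
    ring
  have him : (Complex.I * (s:ℂ) - (u : ℂ)).im = s := by simp
  rw [hsq, him]
  ring

lemma aux_F_cont {s : ℝ} (hs : 0 < s) (n : ℕ) :
    Continuous fun u : ℝ => u ^ n / (u ^ 2 + s ^ 2) := by
  apply Continuous.div (by continuity) (by continuity)
  intro u
  positivity

lemma aux_F_int (ρ : Measure ℝ) {s : ℝ} (hs : 0 < s) (n : ℕ)
    (h : Integrable (fun u : ℝ => u ^ (2 * n)) ρ) :
    Integrable (fun u : ℝ => u ^ (2 * n) / (u ^ 2 + s ^ 2)) ρ := by
  apply (h.const_mul (s ^ 2)⁻¹).mono' (aux_F_cont hs (2 * n)).aestronglyMeasurable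
  filter_upwards with u
  have h0 : (0:ℝ) ≤ u ^ (2 * n) := (even_two_mul n).pow_nonneg u
  have h1 : u ^ (2 * n) / (u ^ 2 + s ^ 2) ≤ u ^ (2 * n) / s ^ 2 := by
    apply div_le_div_of_nonneg_left h0 (by positivity)
    nlinarith [sq_nonneg u]
  rw [Real.norm_eq_abs, abs_of_nonneg (by positivity)]
  calc u ^ (2 * n) / (u ^ 2 + s ^ 2) ≤ u ^ (2 * n) / s ^ 2 := h1
    _ = (s ^ 2)⁻¹ * u ^ (2 * n) := by ring

lemma aux_div_le {s : ℝ} (hs : 0 < s) (n : ℕ) (u : ℝ) :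
    u ^ (2 * (n + 1)) / (u ^ 2 + s ^ 2) ≤ u ^ (2 * n) := by
  rw [div_le_iff₀ (by positivity)]
  have h0 : (0:ℝ) ≤ u ^ (2 * n) := (even_two_mul n).pow_nonneg u
  have : u ^ (2 * (n + 1)) = u ^ (2 * n) * u ^ 2 := by ring
  nlinarith [sq_nonneg s, sq_nonneg u]

lemma aux_mul_div_le {s : ℝ} (hs : 0 < s) (n : ℕ) (u : ℝ) :
    s ^ 2 * (u ^ (2 * n) / (u ^ 2 + s ^ 2)) ≤ u ^ (2 * n) := by
  rw [mul_div_assoc', div_le_iff₀ (by positivity)]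
  have h0 : (0:ℝ) ≤ u ^ (2 * n) := (even_two_mul n).pow_nonneg u
  nlinarith [sq_nonneg u]

lemma aux_tendsto {t : ℕ → ℝ} (ht : ∀ k, 0 < t k) (htt : Tendsto t atTop atTop)
    (n : ℕ) (u : ℝ) :
    Tendsto (fun k => (t k) ^ 2 * (u ^ (2 * n) / (u ^ 2 + (t k) ^ 2))) atTop
      (nhds (u ^ (2 * n))) := by
  have hsq : Tendsto (fun k => (t k) ^ 2) atTop atTop := by
    have := htt.atTop_mul_atTop₀ htt
    refine this.congr fun k => by ring
  have hinv : Tendsto (fun k => ((t k) ^ 2)⁻¹) atTop (nhds 0) :=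
    tendsto_inv_atTop_zero.comp hsq
  have h0 : Tendsto (fun k => u ^ 2 * ((t k) ^ 2)⁻¹) atTop (nhds 0) := by
    simpa using hinv.const_mul (u ^ 2)
  have h1 : Tendsto (fun k => u ^ 2 * ((t k) ^ 2)⁻¹ + 1) atTop (nhds 1) := by
    simpa using h0.add tendsto_const_nhds
  have h2 : Tendsto (fun k => (u ^ 2 * ((t k) ^ 2)⁻¹ + 1)⁻¹) atTop (nhds 1) := by
    simpa using h1.inv₀ one_ne_zero
  have h3 : Tendsto (fun k => u ^ (2 * n) * (u ^ 2 * ((t k) ^ 2)⁻¹ + 1)⁻¹) atTop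
      (nhds (u ^ (2 * n))) := by
    simpa using h2.const_mul (u ^ (2 * n))
  refine h3.congr fun k => ?_
  have hk := ht k
  have hne : (u ^ 2 + (t k) ^ 2) ≠ 0 := by positivity
  field_simp

lemma aux_nu_int (ν : Measure ℝ) [IsProbabilityMeasure ν] {R : ℝ}
    (hR : ∀ᵐ u ∂ν, ‖u‖ ≤ R) (m : ℕ) :
    Integrable (fun u : ℝ => u ^ m) ν := by
  apply (integrable_const (R ^ m)).mono'
    (measurable_id.pow_const m).aestronglyMeasurable
  filter_upwards [hR] with u hu
  rw [Real.norm_eq_abs, abs_pow]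
  exact pow_le_pow_left₀ (abs_nonneg u) hu m

lemma aux_moments (μ ν : Measure ℝ) [IsProbabilityMeasure μ] [IsProbabilityMeasure ν]
    {R : ℝ} (hR : ∀ᵐ u ∂ν, ‖u‖ ≤ R) (t : ℕ → ℝ) (ht : ∀ k, 0 < t k)
    (htt : Tendsto t atTop atTop)
    (h1 : ∀ k, ∫ u : ℝ, (u ^ 2 + (t k) ^ 2)⁻¹ ∂μ = ∫ u : ℝ, (u ^ 2 + (t k) ^ 2)⁻¹ ∂ν) :
    ∀ n : ℕ, Integrable (fun u : ℝ => u ^ (2 * n)) μ ∧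
      (∫ u : ℝ, u ^ (2 * n) ∂μ = ∫ u : ℝ, u ^ (2 * n) ∂ν) ∧
      ∀ k, ∫ u : ℝ, u ^ (2 * n) / (u ^ 2 + (t k) ^ 2) ∂μ
          = ∫ u : ℝ, u ^ (2 * n) / (u ^ 2 + (t k) ^ 2) ∂ν := by
  have hνint : ∀ m, Integrable (fun u : ℝ => u ^ m) ν := aux_nu_int ν hR
  intro n
  induction n with
  | zero =>
    refine ⟨by simpa using (integrable_const (1:ℝ)), by simp, fun k => ?_⟩
    simpa [one_div] using h1 k
  | succ n ih =>
    obtain ⟨hint, hmom, hE⟩ := ih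
    have hE' : ∀ k, ∫ u : ℝ, u ^ (2 * (n+1)) / (u ^ 2 + (t k) ^ 2) ∂μ
        = ∫ u : ℝ, u ^ (2 * (n+1)) / (u ^ 2 + (t k) ^ 2) ∂ν := by
      intro k
      have hk := ht k
      have key : ∀ u : ℝ, u ^ (2*(n+1)) / (u^2 + (t k)^2)
          = u ^ (2*n) - (t k)^2 * (u ^ (2*n) / (u^2 + (t k)^2)) := by
        intro u
        have hne : (u^2 + (t k)^2) ≠ 0 := by positivity
        field_simp
        ring
      have hsplit : ∀ (ρ : Measure ℝ), Integrable (fun u : ℝ => u ^ (2*n)) ρ →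
          ∫ u : ℝ, u ^ (2*(n+1)) / (u^2 + (t k)^2) ∂ρ
            = (∫ u : ℝ, u ^ (2*n) ∂ρ) - (t k)^2 * ∫ u : ℝ, u ^ (2*n) / (u^2 + (t k)^2) ∂ρ := by
        intro ρ hi
        calc ∫ u : ℝ, u ^ (2*(n+1)) / (u^2 + (t k)^2) ∂ρ
            = ∫ u : ℝ, (u ^ (2*n) - (t k)^2 * (u ^ (2*n) / (u^2 + (t k)^2))) ∂ρ := by
              congr 1; funext u; exact key u
          _ = (∫ u : ℝ, u ^ (2*n) ∂ρ) - ∫ u : ℝ, (t k)^2 * (u ^ (2*n) / (u^2 + (t k)^2)) ∂ρ :=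
              integral_sub hi ((aux_F_int ρ hk n hi).const_mul _)
          _ = _ := by rw [integral_const_mul _ _]
      rw [hsplit μ hint, hsplit ν (hνint _), hmom, hE k]
    set C := ∫ u : ℝ, u ^ (2*(n+1)) ∂ν with hC
    have hgint : ∀ k, Integrable (fun u : ℝ => (t k)^2 * (u ^ (2*(n+1)) / (u^2 + (t k)^2))) μ := by
      intro k
      apply Integrable.const_mul
      apply hint.mono' ((aux_F_cont (ht k) _).aestronglyMeasurable)
      filter_upwards with u
      rw [Real.norm_eq_abs, abs_of_nonneg]
      · exact aux_div_le (ht k) n u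
      · apply div_nonneg ((even_two_mul _).pow_nonneg u) (by positivity)
    have hgnn : ∀ k, ∀ u : ℝ, 0 ≤ (t k)^2 * (u ^ (2*(n+1)) / (u^2 + (t k)^2)) := by
      intro k u
      have := (even_two_mul (n+1)).pow_nonneg u
      have hk := ht k
      positivity
    have hmdle : ∀ k, ∀ u : ℝ, (t k)^2 * (u ^ (2*(n+1)) / (u^2 + (t k)^2)) ≤ u ^ (2*(n+1)) :=
      fun k u => aux_mul_div_le (ht k) (n+1) u
    have hgintν : ∀ k, Integrable (fun u : ℝ => (t k)^2 * (u ^ (2*(n+1)) / (u^2 + (t k)^2))) ν :=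
      fun k => (aux_F_int ν (ht k) (n+1) (hνint _)).const_mul _
    have hgeq : ∀ k, ∫ u : ℝ, (t k)^2 * (u ^ (2*(n+1)) / (u^2 + (t k)^2)) ∂μ
        = ∫ u : ℝ, (t k)^2 * (u ^ (2*(n+1)) / (u^2 + (t k)^2)) ∂ν := by
      intro k
      rw [integral_const_mul _ _, integral_const_mul _ _, hE' k]
    have hgle : ∀ k, ∫ u : ℝ, (t k)^2 * (u ^ (2*(n+1)) / (u^2 + (t k)^2)) ∂μ ≤ C := by
      intro k
      rw [hgeq k]
      exact integral_mono (hgintν k) (hνint _) (hmdle k)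
    have hint' : Integrable (fun u : ℝ => u ^ (2*(n+1))) μ := by
      have hmeas : ∀ k, Measurable (fun u : ℝ =>
          ENNReal.ofReal ((t k)^2 * (u ^ (2*(n+1)) / (u^2 + (t k)^2)))) := fun k =>
        (measurable_const.mul (aux_F_cont (ht k) _).measurable).ennreal_ofReal
      refine ⟨(measurable_id.pow_const _).aestronglyMeasurable, ?_⟩
      rw [hasFiniteIntegral_iff_ofReal
        (Eventually.of_forall fun u => (even_two_mul _).pow_nonneg u)]
      have hliminf : ∀ u : ℝ, ENNReal.ofReal (u ^ (2*(n+1)))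
          = liminf (fun k => ENNReal.ofReal ((t k)^2 * (u ^ (2*(n+1)) / (u^2 + (t k)^2)))) atTop :=
        fun u => ((ENNReal.continuous_ofReal.tendsto _).comp
          (aux_tendsto ht htt (n+1) u)).liminf_eq.symm
      calc ∫⁻ u : ℝ, ENNReal.ofReal (u ^ (2*(n+1))) ∂μ
          = ∫⁻ u : ℝ, liminf (fun k =>
              ENNReal.ofReal ((t k)^2 * (u ^ (2*(n+1)) / (u^2 + (t k)^2)))) atTop ∂μ := by
            congr 1; funext u; exact hliminf u
        _ ≤ liminf (fun k => ∫⁻ u : ℝ,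
              ENNReal.ofReal ((t k)^2 * (u ^ (2*(n+1)) / (u^2 + (t k)^2))) ∂μ) atTop :=
            lintegral_liminf_le hmeas
        _ ≤ ENNReal.ofReal C := by
            have hterm : ∀ k, ∫⁻ u : ℝ,
                ENNReal.ofReal ((t k)^2 * (u ^ (2*(n+1)) / (u^2 + (t k)^2))) ∂μ
                ≤ ENNReal.ofReal C := by
              intro k
              rw [← ofReal_integral_eq_lintegral_ofReal (hgint k)
                (Eventually.of_forall (hgnn k))]
              exact ENNReal.ofReal_le_ofReal (hgle k)
            calc liminf (fun k => ∫⁻ u : ℝ,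
                  ENNReal.ofReal ((t k)^2 * (u ^ (2*(n+1)) / (u^2 + (t k)^2))) ∂μ) atTop
                ≤ liminf (fun _ : ℕ => ENNReal.ofReal C) atTop :=
                  liminf_le_liminf (Eventually.of_forall hterm)
              _ = ENNReal.ofReal C := liminf_const _
        _ < ⊤ := ENNReal.ofReal_lt_top
    have hμlim : Tendsto (fun k => ∫ u : ℝ, (t k)^2 * (u ^ (2*(n+1)) / (u^2 + (t k)^2)) ∂μ)
        atTop (nhds (∫ u : ℝ, u ^ (2*(n+1)) ∂μ)) := by
      apply tendsto_integral_of_dominated_convergence (fun u : ℝ => u ^ (2*(n+1)))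
        (fun k => (hgint k).aestronglyMeasurable) hint'
      · intro k
        filter_upwards with u
        rw [Real.norm_eq_abs, abs_of_nonneg (hgnn k u)]
        exact hmdle k u
      · filter_upwards with u
        exact aux_tendsto ht htt (n+1) u
    have hνlim : Tendsto (fun k => ∫ u : ℝ, (t k)^2 * (u ^ (2*(n+1)) / (u^2 + (t k)^2)) ∂ν)
        atTop (nhds (∫ u : ℝ, u ^ (2*(n+1)) ∂ν)) := by
      apply tendsto_integral_of_dominated_convergence (fun u : ℝ => u ^ (2*(n+1)))
        (fun k => (hgintν k).aestronglyMeasurable) (hνint _)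
      · intro k
        filter_upwards with u
        rw [Real.norm_eq_abs, abs_of_nonneg (hgnn k u)]
        exact hmdle k u
      · filter_upwards with u
        exact aux_tendsto ht htt (n+1) u
    have hmom' : ∫ u : ℝ, u ^ (2*(n+1)) ∂μ = ∫ u : ℝ, u ^ (2*(n+1)) ∂ν := by
      apply tendsto_nhds_unique _ hνlim
      exact (funext hgeq : _) ▸ hμlim
    exact ⟨hint', hmom', hE'⟩

lemma aux_cheby (μ : Measure ℝ) [IsProbabilityMeasure μ] {R : ℝ} (hR0 : 0 ≤ R)
    (hint : ∀ n : ℕ, Integrable (fun u : ℝ => u ^ (2 * n)) μ)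
    (hle : ∀ n : ℕ, ∫ u : ℝ, u ^ (2 * n) ∂μ ≤ R ^ (2 * n)) :
    μ {u : ℝ | R + 1 ≤ |u|} = 0 := by
  set s : Set ℝ := {u : ℝ | R + 1 ≤ |u|} with hs
  have hsm : MeasurableSet s := (isClosed_Ici.preimage continuous_abs).measurableSet
  have key : ∀ n : ℕ, (μ s).toReal * (R + 1) ^ (2 * n) ≤ R ^ (2 * n) := by
    intro n
    have h1 : ∫ u in s, (R + 1) ^ (2 * n) ∂μ ≤ ∫ u in s, u ^ (2 * n) ∂μ := by
      apply setIntegral_mono_on (integrableOn_const (measure_ne_top μ s))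
        ((hint n).integrableOn) hsm
      intro u hu
      calc (R + 1) ^ (2 * n) ≤ |u| ^ (2 * n) :=
            pow_le_pow_left₀ (by linarith) hu _
        _ = u ^ (2 * n) := by rw [← abs_pow, abs_of_nonneg ((even_two_mul n).pow_nonneg u)]
    have h2 : ∫ u in s, u ^ (2 * n) ∂μ ≤ ∫ u : ℝ, u ^ (2 * n) ∂μ :=
      setIntegral_le_integral (hint n)
        (Eventually.of_forall fun u => (even_two_mul n).pow_nonneg u)
    have h3 : ∫ u in s, ((R + 1) ^ (2 * n) : ℝ) ∂μ = (μ s).toReal * (R + 1) ^ (2 * n) := by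
      rw [setIntegral_const]
      simp [smul_eq_mul, Measure.real]
    linarith [hle n]
  have hlim : Tendsto (fun n : ℕ => (R / (R + 1)) ^ (2 * n)) atTop (nhds 0) := by
    have h01 : |R / (R + 1)| < 1 := by
      rw [abs_of_nonneg (div_nonneg hR0 (by linarith))]
      rw [div_lt_one (by linarith)]
      linarith
    have h01' : |(R / (R + 1)) ^ 2| < 1 := by
      rw [abs_pow]
      exact pow_lt_one₀ (abs_nonneg _) h01 two_ne_zero
    have := tendsto_pow_atTop_nhds_zero_of_abs_lt_one h01'
    exact this.congr fun n => by rw [← pow_mul]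
  have hto : (μ s).toReal ≤ 0 := by
    apply ge_of_tendsto hlim
    filter_upwards with n
    have hp : (0:ℝ) < (R + 1) ^ (2 * n) := by positivity
    rw [div_pow, le_div_iff₀ hp]
    exact key n
  have h0 : (μ s).toReal = 0 := le_antisymm hto ENNReal.toReal_nonneg
  rw [ENNReal.toReal_eq_zero_iff] at h0
  exact h0.resolve_right (measure_ne_top μ s)

lemma aux_odd (ρ : Measure ℝ) [IsProbabilityMeasure ρ]
    (hsym : ρ.map (fun x : ℝ => -x) = ρ) {m : ℕ} (hm : Odd m) :
    ∫ u : ℝ, u ^ m ∂ρ = 0 := by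
  have h : ∫ u : ℝ, u ^ m ∂ρ = ∫ u : ℝ, (-u) ^ m ∂ρ := by
    conv_lhs => rw [← hsym]
    rw [integral_map measurable_neg.aemeasurable
      (f := fun u : ℝ => u ^ m) ((measurable_id.pow_const m).aestronglyMeasurable)]
  have h2 : ∫ u : ℝ, (-u) ^ m ∂ρ = - ∫ u : ℝ, u ^ m ∂ρ := by
    rw [← integral_neg]
    congr 1
    funext u
    exact hm.neg_pow u
  linarith [h, h2.symm ▸ h]

lemma aux_poly_eq (μ ν : Measure ℝ) [IsProbabilityMeasure μ] [IsProbabilityMeasure ν]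
    (hμint : ∀ m : ℕ, Integrable (fun u : ℝ => u ^ m) μ)
    (hνint : ∀ m : ℕ, Integrable (fun u : ℝ => u ^ m) ν)
    (hm : ∀ m : ℕ, ∫ u : ℝ, u ^ m ∂μ = ∫ u : ℝ, u ^ m ∂ν)
    (p : Polynomial ℝ) :
    ∫ u : ℝ, p.eval u ∂μ = ∫ u : ℝ, p.eval u ∂ν := by
  have hev : ∀ ρ : Measure ℝ, (∀ m : ℕ, Integrable (fun u : ℝ => u ^ m) ρ) →
      ∫ u : ℝ, p.eval u ∂ρ = ∑ i ∈ Finset.range (p.natDegree + 1),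
        p.coeff i * ∫ u : ℝ, u ^ i ∂ρ := by
    intro ρ hi
    calc ∫ u : ℝ, p.eval u ∂ρ
        = ∫ u : ℝ, (∑ i ∈ Finset.range (p.natDegree + 1), p.coeff i * u ^ i) ∂ρ := by
          congr 1; funext u; rw [Polynomial.eval_eq_sum_range]
      _ = ∑ i ∈ Finset.range (p.natDegree + 1), ∫ u : ℝ, p.coeff i * u ^ i ∂ρ :=
          integral_finset_sum _ fun i _ => (hi i).const_mul _
      _ = _ := by
          apply Finset.sum_congr rfl
          intro i _
          exact integral_const_mul _ _
  rw [hev μ hμint, hev ν hνint]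
  exact Finset.sum_congr rfl fun i _ => by rw [hm i]

lemma aux_integrable_of_bounded (ρ : Measure ℝ) [IsProbabilityMeasure ρ]
    {g : ℝ → ℝ} (hg : Continuous g) {C : ℝ} (hgb : ∀ x, ‖g x‖ ≤ C) :
    Integrable g ρ :=
  (integrable_const C).mono' hg.aestronglyMeasurable (Eventually.of_forall hgb)

lemma aux_bc_eq (μ ν : Measure ℝ) [IsProbabilityMeasure μ] [IsProbabilityMeasure ν]
    (hμint : ∀ m : ℕ, Integrable (fun u : ℝ => u ^ m) μ)
    (hνint : ∀ m : ℕ, Integrable (fun u : ℝ => u ^ m) ν)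
    (hm : ∀ m : ℕ, ∫ u : ℝ, u ^ m ∂μ = ∫ u : ℝ, u ^ m ∂ν)
    {S : ℝ} (hμae : ∀ᵐ u ∂μ, u ∈ Set.Icc (-S) S) (hνae : ∀ᵐ u ∂ν, u ∈ Set.Icc (-S) S)
    {g : ℝ → ℝ} (hg : Continuous g) {C : ℝ} (hgb : ∀ x, ‖g x‖ ≤ C) :
    ∫ u : ℝ, g u ∂μ = ∫ u : ℝ, g u ∂ν := by
  have hgμ : Integrable g μ := aux_integrable_of_bounded μ hg hgb
  have hgν : Integrable g ν := aux_integrable_of_bounded ν hg hgb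
  rw [← sub_eq_zero]
  have key : ∀ ε : ℝ, 0 < ε → |∫ u : ℝ, g u ∂μ - ∫ u : ℝ, g u ∂ν| ≤ ε := by
    intro ε hε
    obtain ⟨p, hp⟩ := exists_polynomial_near_of_continuousOn (-S) S g hg.continuousOn
      (ε / 3) (by linarith)
    have hbound : ∀ (ρ : Measure ℝ) [IsProbabilityMeasure ρ],
        (∀ᵐ u ∂ρ, u ∈ Set.Icc (-S) S) → (∀ m : ℕ, Integrable (fun u : ℝ => u ^ m) ρ) →
        Integrable g ρ →
        |∫ u : ℝ, g u ∂ρ - ∫ u : ℝ, p.eval u ∂ρ| ≤ ε / 3 := by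
      intro ρ _ hae hi hgρ
      have hpint : Integrable (fun u : ℝ => p.eval u) ρ := by
        have : (fun u : ℝ => p.eval u)
            = fun u : ℝ => ∑ i ∈ Finset.range (p.natDegree + 1), p.coeff i * u ^ i := by
          funext u; rw [Polynomial.eval_eq_sum_range]
        rw [this]
        exact integrable_finset_sum _ fun i _ => (hi i).const_mul _
      rw [← integral_sub hgρ hpint, ← Real.norm_eq_abs]
      have := norm_integral_le_of_norm_le_const (C := ε / 3) (μ := ρ)
        (f := fun u => g u - p.eval u) ?_
      · simpa using this
      · filter_upwards [hae] with u hu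
        rw [Real.norm_eq_abs, abs_sub_comm]
        exact le_of_lt (hp u hu)
    have h1 := hbound μ hμae hμint hgμ
    have h2 := hbound ν hνae hνint hgν
    have h3 := aux_poly_eq μ ν hμint hνint hm p
    have htri := abs_sub_le (∫ u : ℝ, g u ∂μ) (∫ u : ℝ, p.eval u ∂μ) (∫ u : ℝ, g u ∂ν)
    have hcomm : |∫ u : ℝ, p.eval u ∂μ - ∫ u : ℝ, g u ∂ν|
        = |∫ u : ℝ, g u ∂ν - ∫ u : ℝ, p.eval u ∂ν| := by
      rw [h3, abs_sub_comm]
    linarith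
  have habs : |∫ u : ℝ, g u ∂μ - ∫ u : ℝ, g u ∂ν| ≤ 0 := by
    apply le_of_forall_pos_le_add
    intro ε hε
    linarith [key ε hε]
  exact abs_nonpos_iff.mp habs

/-- If a symmetric probability measure `μ` has the same Cauchy transform as a symmetric
compactly supported probability measure `ν` along a sequence `i t_k` with `t_k → ∞`,
then `μ` has all moments, its moments coincide with those of `ν`, and `μ = ν`. -/
theorem stmt6 (μ ν : Measure ℝ) [IsProbabilityMeasure μ] [IsProbabilityMeasure ν]
    (hμsymm : μ.map (fun x : ℝ => -x) = μ) (hνsymm : ν.map (fun x : ℝ => -x) = ν)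
    (hνcomp : ∃ K : Set ℝ, IsCompact K ∧ ν Kᶜ = 0)
    (t : ℕ → ℝ) (ht : ∀ k, 0 < t k) (htt : Tendsto t atTop atTop)
    (hG : ∀ k : ℕ,
      ∫ u : ℝ, (Complex.I * (t k) - (u : ℂ))⁻¹ ∂μ =
      ∫ u : ℝ, (Complex.I * (t k) - (u : ℂ))⁻¹ ∂ν) :
    (∀ m : ℕ, Integrable (fun u : ℝ => u ^ m) μ) ∧
    (∀ m : ℕ, ∫ u : ℝ, u ^ m ∂μ = ∫ u : ℝ, u ^ m ∂ν) ∧ μ = ν := by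
  obtain ⟨K, hK, hKnull⟩ := hνcomp
  obtain ⟨R0, hR0⟩ := (Metric.isBounded_iff_subset_closedBall 0).1 hK.isBounded
  set R : ℝ := max R0 1 with hRdef
  have hR1 : (1:ℝ) ≤ R := le_max_right _ _
  have hRpos : (0:ℝ) ≤ R := by linarith
  have hR : ∀ᵐ u ∂ν, ‖u‖ ≤ R := by
    rw [ae_iff]
    apply measure_mono_null _ hKnull
    intro u hu
    simp only [Set.mem_setOf_eq, not_le] at hu
    intro huK
    have := hR0 huK
    rw [Metric.mem_closedBall, dist_zero_right] at this
    have : ‖u‖ ≤ R := le_trans this (le_max_left _ _)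
    linarith
  have hνint : ∀ m : ℕ, Integrable (fun u : ℝ => u ^ m) ν := aux_nu_int ν hR
  -- Step 1: real form of the Cauchy transform equality
  have h1 : ∀ k, ∫ u : ℝ, (u ^ 2 + (t k) ^ 2)⁻¹ ∂μ = ∫ u : ℝ, (u ^ 2 + (t k) ^ 2)⁻¹ ∂ν := by
    intro k
    have him := congrArg Complex.im (hG k)
    rw [aux_im μ (ht k), aux_im ν (ht k)] at him
    rw [integral_const_mul _ _, integral_const_mul _ _] at him
    exact mul_left_cancel₀ (by linarith [ht k] : -(t k) ≠ 0) him
  have key := aux_moments μ ν hR t ht htt h1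
  have hμint_even : ∀ n : ℕ, Integrable (fun u : ℝ => u ^ (2 * n)) μ := fun n => (key n).1
  have hmom_even : ∀ n : ℕ, ∫ u : ℝ, u ^ (2 * n) ∂μ = ∫ u : ℝ, u ^ (2 * n) ∂ν :=
    fun n => (key n).2.1
  -- all moments integrable
  have hμint : ∀ m : ℕ, Integrable (fun u : ℝ => u ^ m) μ := by
    intro m
    apply ((integrable_const (1:ℝ)).add (hμint_even m)).mono'
      (measurable_id.pow_const m).aestronglyMeasurable
    filter_upwards with u
    simp only [Pi.add_apply, id_eq]
    rw [Real.norm_eq_abs, ← pow_abs]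
    rcases le_or_gt |u| 1 with h | h
    · have h2 : |u| ^ m ≤ 1 := pow_le_one₀ (abs_nonneg u) h
      have h3 : (0:ℝ) ≤ u ^ (2 * m) := (even_two_mul m).pow_nonneg u
      linarith
    · have h2 : |u| ^ m ≤ |u| ^ (2 * m) :=
        pow_le_pow_right₀ h.le (by omega)
      have h3 : |u| ^ (2 * m) = u ^ (2 * m) := by
        rw [← abs_pow, abs_of_nonneg ((even_two_mul m).pow_nonneg u)]
      linarith
  -- all moments equal
  have hmom : ∀ m : ℕ, ∫ u : ℝ, u ^ m ∂μ = ∫ u : ℝ, u ^ m ∂ν := by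
    intro m
    rcases Nat.even_or_odd m with hm | hm
    · obtain ⟨n, hn⟩ := hm
      have : m = 2 * n := by omega
      rw [this]
      exact hmom_even n
    · rw [aux_odd μ hμsymm hm, aux_odd ν hνsymm hm]
  refine ⟨hμint, hmom, ?_⟩
  -- moment bounds
  have hle : ∀ n : ℕ, ∫ u : ℝ, u ^ (2 * n) ∂μ ≤ R ^ (2 * n) := by
    intro n
    rw [hmom_even n]
    calc ∫ u : ℝ, u ^ (2 * n) ∂ν ≤ ∫ _ : ℝ, R ^ (2 * n) ∂ν := by
          apply integral_mono_ae (hνint _) (integrable_const _)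
          filter_upwards [hR] with u hu
          calc u ^ (2 * n) = |u| ^ (2 * n) := by
                rw [← abs_pow, abs_of_nonneg ((even_two_mul n).pow_nonneg u)]
            _ ≤ R ^ (2 * n) := pow_le_pow_left₀ (abs_nonneg u) hu _
      _ = R ^ (2 * n) := by simp
  have hμnull : μ {u : ℝ | R + 1 ≤ |u|} = 0 := aux_cheby μ hRpos hμint_even hle
  have hμae : ∀ᵐ u ∂μ, u ∈ Set.Icc (-(R+1)) (R+1) := by
    rw [ae_iff]
    apply measure_mono_null _ hμnull
    intro u hu
    simp only [Set.mem_setOf_eq, Set.mem_Icc, not_and_or, not_le] at hu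
    simp only [Set.mem_setOf_eq]
    rcases hu with h | h
    · rw [abs_of_nonpos (by linarith)]; linarith
    · rw [abs_of_pos (by linarith)]; linarith
  have hνae : ∀ᵐ u ∂ν, u ∈ Set.Icc (-(R+1)) (R+1) := by
    filter_upwards [hR] with u hu
    rw [Real.norm_eq_abs] at hu
    rw [Set.mem_Icc, ← abs_le]
    linarith
  apply ext_of_forall_lintegral_eq_of_IsFiniteMeasure
  intro f
  set g : ℝ → ℝ := fun x => (f x : ℝ) with hgdef
  have hg : Continuous g := NNReal.continuous_coe.comp f.continuous
  obtain ⟨C, hC⟩ := f.bounded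
  have hgb : ∀ x, ‖g x‖ ≤ C + g 0 := by
    intro x
    rw [Real.norm_eq_abs, abs_of_nonneg (f x).coe_nonneg]
    have h := hC x 0
    rw [NNReal.dist_eq] at h
    have h2 := le_abs_self ((f x : ℝ) - (f 0 : ℝ))
    simp only [hgdef]
    linarith
  have hgeq := aux_bc_eq μ ν hμint hνint hmom hμae hνae hg hgb
  have hgμ : Integrable g μ := aux_integrable_of_bounded μ hg hgb
  have hgν : Integrable g ν := aux_integrable_of_bounded ν hg hgb
  rw [lintegral_coe_eq_integral _ hgμ, lintegral_coe_eq_integral _ hgν, hgeq]
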